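/- Let X, Y, Z ≥ 0, A, B > 0, β0 > 0, K ≥ 1, and suppose that for every β ≥ β0, Y ≤ K( e^{Aβ} X + e^{-Bβ} Z ). Assume also Y ≤ Z. Then Y ≤ max{2K, e^{Bβ0}} X^{B/(A+B)} Z^{A/(A+B)}. -/

import Mathlib

theorem abstract_interpolation (X Y Z A B β0 K : ℝ)
    (hX : 0 ≤ X) (hY : 0 ≤ Y) (hZ : 0 ≤ Z) (hA : 0 < A) (hB : 0 < B)
    (hβ0 : 0 < β0) (hK : 1 ≤ K)
    (h : ∀ β : ℝ, β0 ≤ β → Y ≤ K * (Real.exp (A * β) * X + Real.exp (-B * β) * Z))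
    (hYZ : Y ≤ Z) :
    Y ≤ max (2 * K) (Real.exp (B * β0)) * X ^ (B / (A + B)) * Z ^ (A / (A + B)) := by
  have hAB : 0 < A + B := by linarith
  have hpq : B / (A + B) + A / (A + B) = 1 := by field_simp; ring
  have hp0 : 0 < B / (A + B) := div_pos hB hAB
  have hq0 : 0 < A / (A + B) := div_pos hA hAB
  have hK0 : 0 < K := lt_of_lt_of_le one_pos hK
  have hmax2K : 2 * K ≤ max (2 * K) (Real.exp (B * β0)) := le_max_left _ _
  have hmaxE : Real.exp (B * β0) ≤ max (2 * K) (Real.exp (B * β0)) := le_max_right _ _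
  have hmax0 : (0:ℝ) ≤ max (2 * K) (Real.exp (B * β0)) :=
    le_trans (Real.exp_pos _).le hmaxE
  rcases eq_or_lt_of_le hZ with hZ0 | hZpos
  · have hY0 : Y ≤ 0 := hYZ.trans (le_of_eq hZ0.symm)
    have hrhs : 0 ≤ max (2 * K) (Real.exp (B * β0)) * X ^ (B / (A + B)) * Z ^ (A / (A + B)) := by
      positivity
    linarith
  rcases eq_or_lt_of_le hX with hX0 | hXpos
  · -- X = 0 : Y ≤ 0
    have hY0 : Y ≤ 0 := by
      have htend : Filter.Tendsto (fun β : ℝ => K * (Real.exp (A * β) * X + Real.exp (-B * β) * Z))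
          Filter.atTop (nhds 0) := by
        have h1 : Filter.Tendsto (fun β : ℝ => Real.exp (-B * β)) Filter.atTop (nhds 0) := by
          have h2 : Filter.Tendsto (fun β : ℝ => -B * β) Filter.atTop Filter.atBot :=
            Filter.Tendsto.const_mul_atTop_of_neg (by linarith) Filter.tendsto_id
          simpa [Function.comp_def] using Real.tendsto_exp_atBot.comp h2
        have : Filter.Tendsto (fun β : ℝ => K * (Real.exp (A * β) * X + Real.exp (-B * β) * Z))
            Filter.atTop (nhds (K * (0 + 0 * Z))) := by
          apply Filter.Tendsto.const_mul
          apply Filter.Tendsto.add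
          · simp [← hX0]
          · exact h1.mul_const Z
        simpa using this
      refine ge_of_tendsto htend ?_
      filter_upwards [Filter.eventually_ge_atTop β0] with β hβ
      exact h β hβ
    have hrhs : max (2 * K) (Real.exp (B * β0)) * X ^ (B / (A + B)) * Z ^ (A / (A + B)) = 0 := by
      rw [← hX0, Real.zero_rpow hp0.ne']
      ring
    linarith [hrhs]
  · -- X > 0, Z > 0
    set β1 := (Real.log Z - Real.log X) / (A + B) with hβ1
    have hkey1 : Real.exp (A * β1) * X = X ^ (B / (A + B)) * Z ^ (A / (A + B)) := by
      have hx : Real.exp (A * β1) * X = Real.exp (A * β1 + Real.log X) := by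
        rw [Real.exp_add, Real.exp_log hXpos]
      rw [hx, Real.rpow_def_of_pos hXpos, Real.rpow_def_of_pos hZpos, ← Real.exp_add]
      congr 1
      rw [hβ1]
      field_simp
      ring
    have hkey2 : Real.exp (-B * β1) * Z = X ^ (B / (A + B)) * Z ^ (A / (A + B)) := by
      have hz : Real.exp (-B * β1) * Z = Real.exp (-B * β1 + Real.log Z) := by
        rw [Real.exp_add, Real.exp_log hZpos]
      rw [hz, Real.rpow_def_of_pos hXpos, Real.rpow_def_of_pos hZpos, ← Real.exp_add]
      congr 1
      rw [hβ1]
      field_simp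
      ring
    have hD0 : 0 ≤ X ^ (B / (A + B)) * Z ^ (A / (A + B)) := by positivity
    by_cases hβ : β0 ≤ β1
    · have := h β1 hβ
      rw [hkey1, hkey2] at this
      calc Y ≤ K * (X ^ (B / (A + B)) * Z ^ (A / (A + B)) +
              X ^ (B / (A + B)) * Z ^ (A / (A + B))) := this
        _ = 2 * K * (X ^ (B / (A + B)) * Z ^ (A / (A + B))) := by ring
        _ ≤ max (2 * K) (Real.exp (B * β0)) * (X ^ (B / (A + B)) * Z ^ (A / (A + B))) :=
            mul_le_mul_of_nonneg_right hmax2K hD0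
        _ = max (2 * K) (Real.exp (B * β0)) * X ^ (B / (A + B)) * Z ^ (A / (A + B)) := by ring
    · push_neg at hβ
      have hZX : Z < Real.exp ((A + B) * β0) * X := by
        have hlog : Real.log Z - Real.log X < (A + B) * β0 := by
          rw [hβ1, div_lt_iff₀ hAB] at hβ
          linarith
        have : Real.log Z < Real.log (Real.exp ((A + B) * β0) * X) := by
          rw [Real.log_mul (Real.exp_pos _).ne' hXpos.ne', Real.log_exp]
          linarith
        exact (Real.log_lt_log_iff hZpos (by positivity)).mp this
      have hstep : Z ≤ Real.exp (B * β0) * X ^ (B / (A + B)) * Z ^ (A / (A + B)) := by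
        have hZsplit : Z = Z ^ (B / (A + B)) * Z ^ (A / (A + B)) := by
          rw [← Real.rpow_add hZpos, hpq, Real.rpow_one]
        have h1 : Z ^ (B / (A + B)) ≤ (Real.exp ((A + B) * β0) * X) ^ (B / (A + B)) :=
          Real.rpow_le_rpow hZ hZX.le hp0.le
        have h2 : (Real.exp ((A + B) * β0) * X) ^ (B / (A + B)) =
            Real.exp (B * β0) * X ^ (B / (A + B)) := by
          rw [Real.mul_rpow (Real.exp_pos _).le hX, ← Real.exp_mul]
          congr 2
          field_simp
        calc Z = Z ^ (B / (A + B)) * Z ^ (A / (A + B)) := hZsplit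
          _ ≤ (Real.exp ((A + B) * β0) * X) ^ (B / (A + B)) * Z ^ (A / (A + B)) := by
              apply mul_le_mul_of_nonneg_right h1 (by positivity)
          _ = Real.exp (B * β0) * X ^ (B / (A + B)) * Z ^ (A / (A + B)) := by rw [h2]
      calc Y ≤ Z := hYZ
        _ ≤ Real.exp (B * β0) * X ^ (B / (A + B)) * Z ^ (A / (A + B)) := hstep
        _ ≤ max (2 * K) (Real.exp (B * β0)) * X ^ (B / (A + B)) * Z ^ (A / (A + B)) := by
            apply mul_le_mul_of_nonneg_right _ (by positivity)
            exact mul_le_mul_of_nonneg_right hmaxE (by positivity)
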